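/- Let X and Y be independent symmetric random variables with X generalized Weibull-tail on ℝ with parameter 1/θ_x and Y generalized Weibull-tail on ℝ with parameter 1/θ_y. Then the product XY is a symmetric random variable that is generalized Weibull-tail on ℝ with tail parameter 1/(θ_x + θ_y). -/

import Mathlib

open MeasureTheory Filter Real Finset

noncomputable section

/-- A positive function `l` on `(0,∞)` is slowly varying if `l(tx)/l(x) → 1` as `x → ∞`
for every `t > 0`. -/
def SlowlyVarying (l : ℝ → ℝ) : Prop :=
  (∀ x : ℝ, 0 < x → 0 < l x) ∧
    ∀ t : ℝ, 0 < t → Tendsto (fun x : ℝ => l (t * x) / l x) atTop (nhds 1)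

/-- A positive function `r` is regularly varying with index `ρ` if `r(tx)/r(x) → t^ρ`. -/
def RegularlyVarying (r : ℝ → ℝ) (ρ : ℝ) : Prop :=
  (∀ᶠ x in atTop, 0 < r x) ∧
    ∀ t : ℝ, 0 < t → Tendsto (fun x : ℝ => r (t * x) / r x) atTop (nhds (t ^ ρ))

/-- Survival function `P(X ≥ x)`. -/
def survival {Ω : Type*} [MeasurableSpace Ω] (μ : Measure Ω) (X : Ω → ℝ) (x : ℝ) : ℝ :=
  (μ {ω | x ≤ X ω}).toReal

/-- `X` is generalized Weibull-tail on `ℝ₊` with tail parameter `β`: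
its survival function is sandwiched between Weibull-tail functions with parameter `β`
for `x` large enough. -/
def GWTpos {Ω : Type*} [MeasurableSpace Ω] (μ : Measure Ω) (X : Ω → ℝ) (β : ℝ) : Prop :=
  ∃ l₁ l₂ : ℝ → ℝ, SlowlyVarying l₁ ∧ SlowlyVarying l₂ ∧
    ∀ᶠ x in atTop, Real.exp (-(x ^ β * l₁ x)) ≤ survival μ X x ∧
      survival μ X x ≤ Real.exp (-(x ^ β * l₂ x))

/-- `X` is generalized Weibull-tail on `ℝ` with tail parameter `β`: both its right tail
`P(X ≥ x)` and its left tail `P(X ≤ -x) = P(-X ≥ x)` are sandwiched between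
Weibull-tail functions with parameter `β`. -/
def GWTreal {Ω : Type*} [MeasurableSpace Ω] (μ : Measure Ω) (X : Ω → ℝ) (β : ℝ) : Prop :=
  GWTpos μ X β ∧ GWTpos μ (fun ω => -X ω) β

/-- `X` is Weibull-tail on `ℝ₊` with tail parameter `β`: `P(X ≥ x) = exp (-x^β l(x))`
for `x > 0`, with `l` slowly varying. -/
def WTpos {Ω : Type*} [MeasurableSpace Ω] (μ : Measure Ω) (X : Ω → ℝ) (β : ℝ) : Prop :=
  ∃ l : ℝ → ℝ, SlowlyVarying l ∧ ∀ x : ℝ, 0 < x →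
    survival μ X x = Real.exp (-(x ^ β * l x))

/-- `X` is Weibull-tail on `ℝ` with tail parameter `β`: both tails are Weibull-tail. -/
def WTreal {Ω : Type*} [MeasurableSpace Ω] (μ : Measure Ω) (X : Ω → ℝ) (β : ℝ) : Prop :=
  WTpos μ X β ∧ WTpos μ (fun ω => -X ω) β

/-- `X` is symmetric: `X` and `-X` have the same distribution. -/
def SymmetricRV {Ω : Type*} [MeasurableSpace Ω] (μ : Measure Ω) (X : Ω → ℝ) : Prop :=
  Measure.map X μ = Measure.map (fun ω => -X ω) μ

lemma tendsto_one_of_bounds {h : ℝ → ℝ}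
    (H : ∀ ε : ℝ, 0 < ε → ε < 1 → ∀ᶠ x in atTop, 1 - ε ≤ h x ∧ h x ≤ 1 + ε) :
    Tendsto h atTop (nhds 1) := by
  rw [Metric.tendsto_nhds]
  intro ε hε
  have hε'0 : 0 < min (ε / 2) 2⁻¹ := lt_min (by linarith) (by norm_num)
  have hε'1 : min (ε / 2) 2⁻¹ < 1 := lt_of_le_of_lt (min_le_right _ _) (by norm_num)
  have hε'ε : min (ε / 2) 2⁻¹ < ε := lt_of_le_of_lt (min_le_left _ _) (by linarith)
  filter_upwards [H _ hε'0 hε'1] with x hx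
  rw [Real.dist_eq, abs_lt]
  constructor
  · linarith [hx.1]
  · linarith [hx.2]

lemma slowlyVarying_op (op : ℝ → ℝ → ℝ)
    (hpos : ∀ a b : ℝ, 0 < a → 0 < b → 0 < op a b)
    (hhom : ∀ c a b : ℝ, 0 ≤ c → op (c * a) (c * b) = c * op a b)
    (hmono : ∀ a a' b b' : ℝ, a ≤ a' → b ≤ b' → op a b ≤ op a' b')
    {f g : ℝ → ℝ} (hf : SlowlyVarying f) (hg : SlowlyVarying g) :
    SlowlyVarying (fun x => op (f x) (g x)) := by
  refine ⟨fun x hx => hpos _ _ (hf.1 x hx) (hg.1 x hx), fun t ht => ?_⟩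
  apply tendsto_one_of_bounds
  intro ε hε hε1
  have hfb := Metric.tendsto_nhds.mp (hf.2 t ht) ε hε
  have hgb := Metric.tendsto_nhds.mp (hg.2 t ht) ε hε
  filter_upwards [hfb, hgb, eventually_gt_atTop 0] with x hfx hgx hx
  have hx' : 0 < t * x := mul_pos ht hx
  have pf := hf.1 x hx
  have pg := hg.1 x hx
  rw [Real.dist_eq, abs_lt] at hfx hgx
  have h1 : f (t * x) ≤ (1 + ε) * f x := by
    have := hfx.2
    nlinarith [(div_lt_iff₀ pf).mp (by linarith : f (t * x) / f x < 1 + ε)]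
  have h2 : g (t * x) ≤ (1 + ε) * g x := by
    nlinarith [(div_lt_iff₀ pg).mp (by linarith : g (t * x) / g x < 1 + ε)]
  have h3 : (1 - ε) * f x ≤ f (t * x) := by
    nlinarith [(lt_div_iff₀ pf).mp (by linarith : (1 - ε : ℝ) < f (t * x) / f x)]
  have h4 : (1 - ε) * g x ≤ g (t * x) := by
    nlinarith [(lt_div_iff₀ pg).mp (by linarith : (1 - ε : ℝ) < g (t * x) / g x)]
  have hop : 0 < op (f x) (g x) := hpos _ _ pf pg
  have hub : op (f (t * x)) (g (t * x)) ≤ (1 + ε) * op (f x) (g x) := by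
    calc op (f (t * x)) (g (t * x)) ≤ op ((1 + ε) * f x) ((1 + ε) * g x) :=
          hmono _ _ _ _ h1 h2
    _ = (1 + ε) * op (f x) (g x) := hhom _ _ _ (by linarith)
  have hlb : (1 - ε) * op (f x) (g x) ≤ op (f (t * x)) (g (t * x)) := by
    calc (1 - ε) * op (f x) (g x) = op ((1 - ε) * f x) ((1 - ε) * g x) :=
          (hhom _ _ _ (by linarith)).symm
    _ ≤ op (f (t * x)) (g (t * x)) := hmono _ _ _ _ h3 h4
  constructor
  · rw [le_div_iff₀ hop]; linarith
  · rw [div_le_iff₀ hop]; linarith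

lemma slowlyVarying_add {f g : ℝ → ℝ} (hf : SlowlyVarying f) (hg : SlowlyVarying g) :
    SlowlyVarying (fun x => f x + g x) :=
  slowlyVarying_op (· + ·) (fun _ _ => add_pos) (fun c a b _ => by ring)
    (fun _ _ _ _ => add_le_add) hf hg

lemma slowlyVarying_min {f g : ℝ → ℝ} (hf : SlowlyVarying f) (hg : SlowlyVarying g) :
    SlowlyVarying (fun x => min (f x) (g x)) := by
  refine slowlyVarying_op (fun a b => min a b) (fun _ _ => lt_min) ?_
    (fun _ _ _ _ => min_le_min) hf hg
  intro c a b hc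
  show min (c * a) (c * b) = c * min a b
  rcases le_total a b with h | h
  · rw [min_eq_left h, min_eq_left (mul_le_mul_of_nonneg_left h hc)]
  · rw [min_eq_right h, min_eq_right (mul_le_mul_of_nonneg_left h hc)]

lemma slowlyVarying_comp_rpow {l : ℝ → ℝ} (hl : SlowlyVarying l) {c : ℝ} (hc : 0 < c) :
    SlowlyVarying (fun x => l (x ^ c)) := by
  refine ⟨fun x hx => hl.1 _ (Real.rpow_pos_of_pos hx c), fun t ht => ?_⟩
  have h2 := (hl.2 (t ^ c) (Real.rpow_pos_of_pos ht c)).comp (tendsto_rpow_atTop hc)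
  apply h2.congr'
  filter_upwards [eventually_gt_atTop 0] with x hx
  simp only [Function.comp_apply]
  rw [Real.mul_rpow ht.le hx.le]

lemma slowlyVarying_half {f : ℝ → ℝ} (hf : SlowlyVarying f) :
    SlowlyVarying (fun x => f x / 2) := by
  refine ⟨fun x hx => by have := hf.1 x hx; positivity, fun t ht => ?_⟩
  apply (hf.2 t ht).congr'
  filter_upwards [eventually_gt_atTop 0] with x hx
  have hne := (hf.1 x hx).ne'
  field_simp

lemma eventually_survival_le_half {Ω : Type*} [MeasurableSpace Ω] (μ : Measure Ω)
    [IsProbabilityMeasure μ] {V : Ω → ℝ} (hV : Measurable V) :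
    ∀ᶠ z in atTop, survival μ V z ≤ 1 / 2 := by
  have hmeas : ∀ n : ℕ, MeasurableSet {ω | (n : ℝ) ≤ V ω} := fun n =>
    measurableSet_le measurable_const hV
  have hanti : Antitone (fun n : ℕ => {ω | (n : ℝ) ≤ V ω}) := by
    intro m n hmn ω hω
    have hc : (m : ℝ) ≤ (n : ℝ) := Nat.cast_le.mpr hmn
    exact le_trans hc hω
  have hempty : ⋂ n : ℕ, {ω | (n : ℝ) ≤ V ω} = ∅ := by
    ext ω
    simp only [Set.mem_iInter, Set.mem_setOf_eq, Set.mem_empty_iff_false, iff_false, not_forall]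
    obtain ⟨n, hn⟩ := exists_nat_gt (V ω)
    exact ⟨n, not_le.mpr hn⟩
  have htend := tendsto_measure_iInter_atTop (μ := μ)
    (fun n => (hmeas n).nullMeasurableSet) hanti ⟨0, measure_ne_top μ _⟩
  rw [hempty, measure_empty] at htend
  have h2 : ∀ᶠ n : ℕ in atTop, μ {ω | (n : ℝ) ≤ V ω} < ENNReal.ofReal (1 / 2) := by
    have : (0 : ENNReal) < ENNReal.ofReal (1 / 2) := by norm_num
    exact htend.eventually_lt_const this
  obtain ⟨N, hN⟩ := eventually_atTop.mp h2
  rw [eventually_atTop]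
  refine ⟨(N : ℝ), fun z hz => ?_⟩
  have hsub : {ω | z ≤ V ω} ⊆ {ω | (N : ℝ) ≤ V ω} := fun ω hω => le_trans hz hω
  calc survival μ V z ≤ (μ {ω | (N : ℝ) ≤ V ω}).toReal :=
        ENNReal.toReal_mono (measure_ne_top μ _) (measure_mono hsub)
  _ ≤ 1 / 2 := ENNReal.toReal_le_of_le_ofReal (by norm_num) (hN N le_rfl).le

lemma measure_neg_event {Ω : Type*} [MeasurableSpace Ω] {μ : Measure Ω} {V : Ω → ℝ}
    (hV : Measurable V) (hs : SymmetricRV μ V) (x : ℝ) :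
    μ {ω | x ≤ -V ω} = μ {ω | x ≤ V ω} := by
  have h1 : μ {ω | x ≤ V ω} = (Measure.map V μ) (Set.Ici x) := by
    rw [Measure.map_apply hV measurableSet_Ici]; rfl
  have h2 : μ {ω | x ≤ -V ω} = (Measure.map (fun ω => -V ω) μ) (Set.Ici x) := by
    rw [Measure.map_apply (show Measurable fun ω => -V ω from hV.neg) measurableSet_Ici]; rfl
  rw [h1, h2, hs]

lemma survival_neg {Ω : Type*} [MeasurableSpace Ω] {μ : Measure Ω} {V : Ω → ℝ}
    (hV : Measurable V) (hs : SymmetricRV μ V) (x : ℝ) :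
    survival μ (fun ω => -V ω) x = survival μ V x := by
  unfold survival
  rw [measure_neg_event hV hs]

/-- Product of two independent symmetric generalized Weibull-tail variables on `ℝ` with
parameters `1/θx` and `1/θy` is a symmetric generalized Weibull-tail variable on `ℝ`
with parameter `1/(θx + θy)`. -/
theorem gwtReal_mul_of_indep_symm {Ω : Type*} [MeasurableSpace Ω]
    (μ : Measure Ω) [IsProbabilityMeasure μ] (X Y : Ω → ℝ)
    (hmX : Measurable X) (hmY : Measurable Y)
    (θx θy : ℝ) (hθx : 0 < θx) (hθy : 0 < θy)
    (hindep : ProbabilityTheory.IndepFun X Y μ)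
    (hsymX : SymmetricRV μ X) (hsymY : SymmetricRV μ Y)
    (hX : GWTreal μ X (1 / θx)) (hY : GWTreal μ Y (1 / θy)) :
    SymmetricRV μ (fun ω => X ω * Y ω) ∧
      GWTreal μ (fun ω => X ω * Y ω) (1 / (θx + θy)) := by
  obtain ⟨⟨lX1, lX2, hsvX1, hsvX2, hXb⟩, -⟩ := hX
  obtain ⟨⟨lY1, lY2, hsvY1, hsvY2, hYb⟩, -⟩ := hY
  have hθ : 0 < θx + θy := by linarith
  have hθxne : θx ≠ 0 := ne_of_gt hθx
  have hθyne : θy ≠ 0 := ne_of_gt hθy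
  have hθne : θx + θy ≠ 0 := ne_of_gt hθ
  have hcx : 0 < θx / (θx + θy) := div_pos hθx hθ
  have hcy : 0 < θy / (θx + θy) := div_pos hθy hθ
  have hmW : Measurable fun ω => X ω * Y ω := hmX.mul hmY
  -- symmetry of the product
  have h1 : Measure.map (fun ω => (X ω, Y ω)) μ = (Measure.map X μ).prod (Measure.map Y μ) :=
    (ProbabilityTheory.indepFun_iff_map_prod_eq_prod_map_map hmX.aemeasurable
      hmY.aemeasurable).mp hindep
  have hnegindep : ProbabilityTheory.IndepFun (fun ω => -X ω) Y μ :=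
    hindep.comp measurable_neg measurable_id
  have h2 : Measure.map (fun ω => (-X ω, Y ω)) μ
      = (Measure.map (fun ω => -X ω) μ).prod (Measure.map Y μ) :=
    (ProbabilityTheory.indepFun_iff_map_prod_eq_prod_map_map hmX.neg.aemeasurable
      hmY.aemeasurable).mp hnegindep
  have hmul : Measurable fun p : ℝ × ℝ => p.1 * p.2 := measurable_fst.mul measurable_snd
  have hsymW : SymmetricRV μ fun ω => X ω * Y ω := by
    show Measure.map (fun ω => X ω * Y ω) μ = Measure.map (fun ω => -(X ω * Y ω)) μ
    have c1 : Measure.map (fun ω => X ω * Y ω) μ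
        = Measure.map (fun p : ℝ × ℝ => p.1 * p.2) ((Measure.map X μ).prod (Measure.map Y μ)) := by
      rw [← h1, Measure.map_map hmul (hmX.prodMk hmY)]
      rfl
    have c2 : Measure.map (fun ω => -(X ω * Y ω)) μ
        = Measure.map (fun p : ℝ × ℝ => p.1 * p.2) ((Measure.map X μ).prod (Measure.map Y μ)) := by
      rw [hsymX, ← h2, Measure.map_map hmul (show Measurable fun ω => (-X ω, Y ω) from hmX.neg.prodMk hmY)]
      congr 1
      funext ω
      simp [Function.comp, neg_mul]
    rw [c1, c2]
  have hsW : ∀ x, survival μ (fun ω => -(X ω * Y ω)) x = survival μ (fun ω => X ω * Y ω) x :=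
    fun x => survival_neg hmW hsymW x
  -- exponent arithmetic
  have hexpX : ∀ z : ℝ, 0 < z →
      (z ^ (θx / (θx + θy))) ^ (1 / θx) = z ^ (1 / (θx + θy)) := by
    intro z hz
    rw [← Real.rpow_mul hz.le]
    congr 1
    field_simp
  have hexpY : ∀ z : ℝ, 0 < z →
      (z ^ (θy / (θx + θy))) ^ (1 / θy) = z ^ (1 / (θx + θy)) := by
    intro z hz
    rw [← Real.rpow_mul hz.le]
    congr 1
    field_simp
  have hEa := (tendsto_rpow_atTop hcx).eventually hXb
  have hEb := (tendsto_rpow_atTop hcy).eventually hYb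
  have hEhalf := eventually_survival_le_half μ hmW
  have hpos : GWTpos μ (fun ω => X ω * Y ω) (1 / (θx + θy)) := by
    refine ⟨fun z => lX1 (z ^ (θx / (θx + θy))) + lY1 (z ^ (θy / (θx + θy))),
        fun z => min (lX2 (z ^ (θx / (θx + θy)))) (lY2 (z ^ (θy / (θx + θy)))) / 2,
        slowlyVarying_add (slowlyVarying_comp_rpow hsvX1 hcx) (slowlyVarying_comp_rpow hsvY1 hcy),
        slowlyVarying_half (slowlyVarying_min (slowlyVarying_comp_rpow hsvX2 hcx)
          (slowlyVarying_comp_rpow hsvY2 hcy)), ?_⟩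
    filter_upwards [hEa, hEb, hEhalf, eventually_gt_atTop 0] with z hza hzb hhalf hz0
    have ha0 : (0:ℝ) < z ^ (θx / (θx + θy)) := Real.rpow_pos_of_pos hz0 _
    have hb0 : (0:ℝ) < z ^ (θy / (θx + θy)) := Real.rpow_pos_of_pos hz0 _
    have hab : z ^ (θx / (θx + θy)) * z ^ (θy / (θx + θy)) = z := by
      rw [← Real.rpow_add hz0]
      have hone : θx / (θx + θy) + θy / (θx + θy) = 1 := by field_simp
      rw [hone, Real.rpow_one]
    rw [hexpX z hz0] at hza
    rw [hexpY z hz0] at hzb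
    constructor
    · -- lower bound
      have hincl : {ω | z ^ (θx / (θx + θy)) ≤ X ω} ∩ {ω | z ^ (θy / (θx + θy)) ≤ Y ω}
          ⊆ {ω | z ≤ X ω * Y ω} := by
        rintro ω ⟨hx1, hy1⟩
        simp only [Set.mem_setOf_eq] at hx1 hy1 ⊢
        calc z = z ^ (θx / (θx + θy)) * z ^ (θy / (θx + θy)) := hab.symm
        _ ≤ X ω * Y ω := mul_le_mul hx1 hy1 hb0.le (le_trans ha0.le hx1)
      have hprod : μ ({ω | z ^ (θx / (θx + θy)) ≤ X ω} ∩ {ω | z ^ (θy / (θx + θy)) ≤ Y ω})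
          = μ {ω | z ^ (θx / (θx + θy)) ≤ X ω} * μ {ω | z ^ (θy / (θx + θy)) ≤ Y ω} :=
        hindep.measure_inter_preimage_eq_mul _ _ measurableSet_Ici measurableSet_Ici
      have hmono : survival μ X (z ^ (θx / (θx + θy))) * survival μ Y (z ^ (θy / (θx + θy)))
          ≤ survival μ (fun ω => X ω * Y ω) z := by
        unfold survival
        rw [← ENNReal.toReal_mul, ← hprod]
        exact ENNReal.toReal_mono (measure_ne_top μ _) (measure_mono hincl)
      calc Real.exp (-(z ^ (1 / (θx + θy)) *
              (lX1 (z ^ (θx / (θx + θy))) + lY1 (z ^ (θy / (θx + θy))))))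
          = Real.exp (-(z ^ (1 / (θx + θy)) * lX1 (z ^ (θx / (θx + θy))))) *
            Real.exp (-(z ^ (1 / (θx + θy)) * lY1 (z ^ (θy / (θx + θy))))) := by
            rw [← Real.exp_add]; congr 1; ring
      _ ≤ survival μ X (z ^ (θx / (θx + θy))) * survival μ Y (z ^ (θy / (θx + θy))) :=
            mul_le_mul hza.1 hzb.1 (Real.exp_pos _).le ENNReal.toReal_nonneg
      _ ≤ survival μ (fun ω => X ω * Y ω) z := hmono
    · -- upper bound
      have mW2 : MeasurableSet {ω | z ≤ -(X ω * Y ω)} := measurableSet_le measurable_const hmW.neg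
      have mX2 : MeasurableSet {ω | X ω ≤ -(z ^ (θx / (θx + θy)))} :=
        measurableSet_le hmX measurable_const
      have mY2 : MeasurableSet {ω | Y ω ≤ -(z ^ (θy / (θx + θy)))} :=
        measurableSet_le hmY measurable_const
      have hdisjW : Disjoint {ω | z ≤ X ω * Y ω} {ω | z ≤ -(X ω * Y ω)} := by
        rw [Set.disjoint_left]
        intro ω hω1 hω2
        simp only [Set.mem_setOf_eq] at hω1 hω2
        linarith
      have hdisjX : Disjoint {ω | z ^ (θx / (θx + θy)) ≤ X ω}
          {ω | X ω ≤ -(z ^ (θx / (θx + θy)))} := by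
        rw [Set.disjoint_left]
        intro ω hω1 hω2
        simp only [Set.mem_setOf_eq] at hω1 hω2
        linarith
      have hdisjY : Disjoint {ω | z ^ (θy / (θx + θy)) ≤ Y ω}
          {ω | Y ω ≤ -(z ^ (θy / (θx + θy)))} := by
        rw [Set.disjoint_left]
        intro ω hω1 hω2
        simp only [Set.mem_setOf_eq] at hω1 hω2
        linarith
      have hsub : {ω | z ≤ X ω * Y ω} ∪ {ω | z ≤ -(X ω * Y ω)}
          ⊆ ({ω | z ^ (θx / (θx + θy)) ≤ X ω} ∪ {ω | X ω ≤ -(z ^ (θx / (θx + θy)))})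
            ∪ ({ω | z ^ (θy / (θx + θy)) ≤ Y ω} ∪ {ω | Y ω ≤ -(z ^ (θy / (θx + θy)))}) := by
        intro ω hω
        simp only [Set.mem_union, Set.mem_setOf_eq] at hω ⊢
        have habs : z ≤ |X ω * Y ω| := by
          rcases hω with h | h
          · exact le_abs.mpr (Or.inl h)
          · exact le_abs.mpr (Or.inr h)
        rcases le_or_gt (z ^ (θx / (θx + θy))) |X ω| with hXa | hXa
        · left
          rcases le_abs.mp hXa with h | h
          · exact Or.inl h
          · exact Or.inr (by linarith)
        · rcases le_or_gt (z ^ (θy / (θx + θy))) |Y ω| with hYa | hYa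
          · right
            rcases le_abs.mp hYa with h | h
            · exact Or.inl h
            · exact Or.inr (by linarith)
          · exfalso
            have hlt : |X ω * Y ω| < z ^ (θx / (θx + θy)) * z ^ (θy / (θx + θy)) := by
              rw [abs_mul]
              exact mul_lt_mul'' hXa hYa (abs_nonneg _) (abs_nonneg _)
            rw [hab] at hlt
            linarith
      have hWm : μ {ω | z ≤ -(X ω * Y ω)} = μ {ω | z ≤ X ω * Y ω} :=
        measure_neg_event hmW hsymW z
      have hXm : μ {ω | X ω ≤ -(z ^ (θx / (θx + θy)))}
          = μ {ω | z ^ (θx / (θx + θy)) ≤ X ω} := by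
        have hset : {ω | X ω ≤ -(z ^ (θx / (θx + θy)))}
            = {ω | z ^ (θx / (θx + θy)) ≤ -X ω} := by
          ext ω
          simp only [Set.mem_setOf_eq]
          constructor <;> intro h <;> linarith
        rw [hset, measure_neg_event hmX hsymX]
      have hYm : μ {ω | Y ω ≤ -(z ^ (θy / (θx + θy)))}
          = μ {ω | z ^ (θy / (θx + θy)) ≤ Y ω} := by
        have hset : {ω | Y ω ≤ -(z ^ (θy / (θx + θy)))}
            = {ω | z ^ (θy / (θx + θy)) ≤ -Y ω} := by
          ext ω
          simp only [Set.mem_setOf_eq]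
          constructor <;> intro h <;> linarith
        rw [hset, measure_neg_event hmY hsymY]
      have hchain : μ {ω | z ≤ X ω * Y ω} + μ {ω | z ≤ X ω * Y ω}
          ≤ (μ {ω | z ^ (θx / (θx + θy)) ≤ X ω} + μ {ω | z ^ (θx / (θx + θy)) ≤ X ω})
            + (μ {ω | z ^ (θy / (θx + θy)) ≤ Y ω} + μ {ω | z ^ (θy / (θx + θy)) ≤ Y ω}) := by
        calc μ {ω | z ≤ X ω * Y ω} + μ {ω | z ≤ X ω * Y ω}
            = μ {ω | z ≤ X ω * Y ω} + μ {ω | z ≤ -(X ω * Y ω)} := by rw [hWm]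
        _ = μ ({ω | z ≤ X ω * Y ω} ∪ {ω | z ≤ -(X ω * Y ω)}) :=
              (measure_union hdisjW mW2).symm
        _ ≤ μ (({ω | z ^ (θx / (θx + θy)) ≤ X ω} ∪ {ω | X ω ≤ -(z ^ (θx / (θx + θy)))})
              ∪ ({ω | z ^ (θy / (θx + θy)) ≤ Y ω} ∪ {ω | Y ω ≤ -(z ^ (θy / (θx + θy)))})) :=
              measure_mono hsub
        _ ≤ μ ({ω | z ^ (θx / (θx + θy)) ≤ X ω} ∪ {ω | X ω ≤ -(z ^ (θx / (θx + θy)))})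
              + μ ({ω | z ^ (θy / (θx + θy)) ≤ Y ω} ∪ {ω | Y ω ≤ -(z ^ (θy / (θx + θy)))}) :=
              measure_union_le _ _
        _ = (μ {ω | z ^ (θx / (θx + θy)) ≤ X ω} + μ {ω | z ^ (θx / (θx + θy)) ≤ X ω})
              + (μ {ω | z ^ (θy / (θx + θy)) ≤ Y ω} + μ {ω | z ^ (θy / (θx + θy)) ≤ Y ω}) := by
              rw [measure_union hdisjX mX2, measure_union hdisjY mY2, hXm, hYm]
      have hfin : ∀ s : Set Ω, μ s ≠ ⊤ := fun s => measure_ne_top μ s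
      have h2r := ENNReal.toReal_mono
        (ENNReal.add_ne_top.mpr ⟨ENNReal.add_ne_top.mpr ⟨hfin _, hfin _⟩,
          ENNReal.add_ne_top.mpr ⟨hfin _, hfin _⟩⟩) hchain
      rw [ENNReal.toReal_add (hfin _) (hfin _),
        ENNReal.toReal_add (ENNReal.add_ne_top.mpr ⟨hfin _, hfin _⟩)
          (ENNReal.add_ne_top.mpr ⟨hfin _, hfin _⟩),
        ENNReal.toReal_add (hfin _) (hfin _), ENNReal.toReal_add (hfin _) (hfin _)] at h2r
      have key : survival μ (fun ω => X ω * Y ω) z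
          ≤ survival μ X (z ^ (θx / (θx + θy))) + survival μ Y (z ^ (θy / (θx + θy))) := by
        unfold survival
        simp only []
        linarith [h2r]
      have hrp : (0:ℝ) ≤ z ^ (1 / (θx + θy)) := (Real.rpow_pos_of_pos hz0 _).le
      by_cases hcase : Real.log 2 ≤ z ^ (1 / (θx + θy)) *
          (min (lX2 (z ^ (θx / (θx + θy)))) (lY2 (z ^ (θy / (θx + θy)))) / 2)
      · have hminA : Real.exp (-(z ^ (1 / (θx + θy)) * lX2 (z ^ (θx / (θx + θy)))))
            ≤ Real.exp (-(z ^ (1 / (θx + θy)) *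
              min (lX2 (z ^ (θx / (θx + θy)))) (lY2 (z ^ (θy / (θx + θy)))))) :=
          Real.exp_le_exp.mpr (neg_le_neg (mul_le_mul_of_nonneg_left (min_le_left _ _) hrp))
        have hminB : Real.exp (-(z ^ (1 / (θx + θy)) * lY2 (z ^ (θy / (θx + θy)))))
            ≤ Real.exp (-(z ^ (1 / (θx + θy)) *
              min (lX2 (z ^ (θx / (θx + θy)))) (lY2 (z ^ (θy / (θx + θy)))))) :=
          Real.exp_le_exp.mpr (neg_le_neg (mul_le_mul_of_nonneg_left (min_le_right _ _) hrp))
        calc survival μ (fun ω => X ω * Y ω) z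
            ≤ survival μ X (z ^ (θx / (θx + θy))) + survival μ Y (z ^ (θy / (θx + θy))) := key
        _ ≤ Real.exp (-(z ^ (1 / (θx + θy)) * lX2 (z ^ (θx / (θx + θy)))))
              + Real.exp (-(z ^ (1 / (θx + θy)) * lY2 (z ^ (θy / (θx + θy))))) :=
              add_le_add hza.2 hzb.2
        _ ≤ 2 * Real.exp (-(z ^ (1 / (θx + θy)) *
              min (lX2 (z ^ (θx / (θx + θy)))) (lY2 (z ^ (θy / (θx + θy)))))) := by
              have := add_le_add hminA hminB
              linarith
        _ ≤ Real.exp (-(z ^ (1 / (θx + θy)) *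
              (min (lX2 (z ^ (θx / (θx + θy)))) (lY2 (z ^ (θy / (θx + θy)))) / 2))) := by
              rw [show (2:ℝ) * Real.exp (-(z ^ (1 / (θx + θy)) *
                  min (lX2 (z ^ (θx / (θx + θy)))) (lY2 (z ^ (θy / (θx + θy))))))
                = Real.exp (Real.log 2 + -(z ^ (1 / (θx + θy)) *
                  min (lX2 (z ^ (θx / (θx + θy)))) (lY2 (z ^ (θy / (θx + θy)))))) from by
                rw [Real.exp_add, Real.exp_log two_pos]]
              apply Real.exp_le_exp.mpr
              have harith : z ^ (1 / (θx + θy)) *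
                  (min (lX2 (z ^ (θx / (θx + θy)))) (lY2 (z ^ (θy / (θx + θy)))) / 2) * 2
                  = z ^ (1 / (θx + θy)) *
                  min (lX2 (z ^ (θx / (θx + θy)))) (lY2 (z ^ (θy / (θx + θy)))) := by ring
              linarith
      · push_neg at hcase
        have h2' : Real.exp (-Real.log 2) = 1 / 2 := by
          rw [Real.exp_neg, Real.exp_log two_pos]
          norm_num
        calc survival μ (fun ω => X ω * Y ω) z ≤ 1 / 2 := hhalf
        _ = Real.exp (-Real.log 2) := h2'.symm
        _ ≤ Real.exp (-(z ^ (1 / (θx + θy)) *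
              (min (lX2 (z ^ (θx / (θx + θy)))) (lY2 (z ^ (θy / (θx + θy)))) / 2))) :=
            Real.exp_le_exp.mpr (by linarith)
  refine ⟨hsymW, hpos, ?_⟩
  obtain ⟨l₁, l₂, hsv₁, hsv₂, hEv⟩ := hpos
  refine ⟨l₁, l₂, hsv₁, hsv₂, hEv.mono fun x hx => ?_⟩
  constructor
  · exact hx.1.trans_eq (hsW x).symm
  · exact (hsW x).trans_le hx.2
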